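/- Suppose a_1, a_2, a_3 are unit vectors in R^3 lying in the plane z = 0 (i.e., third coordinate zero), with weights p_i ≥ 0, Σ_i p_i = 2, Σ_i p_i a_i = 0, and let f(x) = Σ_i p_i Θ(x·a_i). Then f(v_{s_x s_y s_z}) does not depend on s_z, and combined with f(v) = f(-v), there exist at most two distinct values C_1 = f(1,1,±1) and C_2 = f(1,-1,±1) among the eight vertices, satisfying C_1 + C_2 ≤ 2. -/

import Mathlib

open RealInnerProductSpace

/-- The vertex `(s_x, s_y, s_z)` of the cube `[-1,1]^3`, signs encoded by booleans. -/
noncomputable def cubeVtx3 (sx sy sz : Bool) : EuclideanSpace ℝ (Fin 3) :=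
  WithLp.toLp 2 (![if sx then 1 else -1, if sy then 1 else -1, if sz then 1 else -1] : Fin 3 → ℝ)

lemma key_max_ineq (s t : ℝ) (hs : s ^ 2 ≤ 1) (ht : t ^ 2 ≤ 1) :
    max (s + t) 0 + max (s - t) 0 ≤ 1 + s := by
  rcases max_cases (s + t) 0 with ⟨h1, h2⟩ | ⟨h1, h2⟩ <;>
    rcases max_cases (s - t) 0 with ⟨h3, h4⟩ | ⟨h3, h4⟩ <;>
    rw [h1, h3] <;> nlinarith

theorem planar_povm_two_values
    (a : Fin 3 → EuclideanSpace ℝ (Fin 3)) (p : Fin 3 → ℝ)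
    (ha : ∀ i, ‖a i‖ = 1) (haz : ∀ i, a i 2 = 0) (hp : ∀ i, 0 ≤ p i)
    (hp2 : ∑ i, p i = 2) (hsum : ∑ i, p i • a i = 0)
    (f : EuclideanSpace ℝ (Fin 3) → ℝ)
    (hf : ∀ x, f x = ∑ i, p i * max ⟪x, a i⟫ 0) :
    (∀ sx sy : Bool, f (cubeVtx3 sx sy true) = f (cubeVtx3 sx sy false)) ∧
    (∀ sx sy sz : Bool, f (cubeVtx3 sx sy sz) = f (cubeVtx3 (!sx) (!sy) (!sz))) ∧
    (∀ sx sy sz : Bool, f (cubeVtx3 sx sy sz) = f (cubeVtx3 true true true) ∨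
        f (cubeVtx3 sx sy sz) = f (cubeVtx3 true false true)) ∧
    f (cubeVtx3 true true true) + f (cubeVtx3 true false true) ≤ 2 := by
  -- inner product with a vertex
  have hinner : ∀ (i : Fin 3) (sx sy sz : Bool),
      ⟪cubeVtx3 sx sy sz, a i⟫ =
        (if sx then (1:ℝ) else -1) * a i 0 + (if sy then (1:ℝ) else -1) * a i 1 := by
    intro i sx sy sz
    simp [cubeVtx3, PiLp.inner_apply, Fin.sum_univ_three, haz i, RCLike.inner_apply]
  -- components of hsum
  have hsum0 : ∑ i, p i * a i 0 = 0 := by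
    have := congrArg (fun v : EuclideanSpace ℝ (Fin 3) => v 0) hsum
    simpa [WithLp.ofLp_sum, Finset.sum_apply, PiLp.smul_apply] using this
  have hsum1 : ∑ i, p i * a i 1 = 0 := by
    have := congrArg (fun v : EuclideanSpace ℝ (Fin 3) => v 1) hsum
    simpa [WithLp.ofLp_sum, Finset.sum_apply, PiLp.smul_apply] using this
  -- squares bounded by 1
  have hsq : ∀ i : Fin 3, (a i 0) ^ 2 + (a i 1) ^ 2 = 1 := by
    intro i
    have h := ha i
    rw [EuclideanSpace.norm_eq] at h
    have h2 : Real.sqrt ((a i 0) ^ 2 + (a i 1) ^ 2) = 1 := by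
      rw [← h]
      congr 1
      simp [Fin.sum_univ_three, haz i, sq]
    nlinarith [Real.sq_sqrt (by positivity : (0:ℝ) ≤ (a i 0) ^ 2 + (a i 1) ^ 2),
      h2]
  -- part 1: independence of sz
  have part1 : ∀ sx sy sz sz' : Bool, f (cubeVtx3 sx sy sz) = f (cubeVtx3 sx sy sz') := by
    intro sx sy sz sz'
    rw [hf, hf]
    refine Finset.sum_congr rfl fun i _ => ?_
    rw [hinner, hinner]
  -- linearity of inner sum
  have hlin : ∀ sx sy sz : Bool, ∑ i, p i * ⟪cubeVtx3 sx sy sz, a i⟫ = 0 := by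
    intro sx sy sz
    have : ∑ i, p i * ⟪cubeVtx3 sx sy sz, a i⟫ =
        (if sx then (1:ℝ) else -1) * ∑ i, p i * a i 0 +
        (if sy then (1:ℝ) else -1) * ∑ i, p i * a i 1 := by
      rw [Finset.mul_sum, Finset.mul_sum, ← Finset.sum_add_distrib]
      refine Finset.sum_congr rfl fun i _ => ?_
      rw [hinner]; ring
    rw [this, hsum0, hsum1]; ring
  -- part 2: antipodal symmetry
  have hneg : ∀ (i : Fin 3) (sx sy sz : Bool),
      ⟪cubeVtx3 (!sx) (!sy) (!sz), a i⟫ = -⟪cubeVtx3 sx sy sz, a i⟫ := by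
    intro i sx sy sz
    rw [hinner, hinner]
    cases sx <;> cases sy <;> simp <;> ring
  have part2 : ∀ sx sy sz : Bool,
      f (cubeVtx3 sx sy sz) = f (cubeVtx3 (!sx) (!sy) (!sz)) := by
    intro sx sy sz
    rw [hf, hf]
    have key : ∀ i : Fin 3,
        p i * max ⟪cubeVtx3 (!sx) (!sy) (!sz), a i⟫ 0 =
        p i * max ⟪cubeVtx3 sx sy sz, a i⟫ 0 - p i * ⟪cubeVtx3 sx sy sz, a i⟫ := by
      intro i
      rw [hneg]
      rcases le_total (⟪cubeVtx3 sx sy sz, a i⟫ : ℝ) 0 with h | h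
      · rw [max_eq_left (by linarith : (0:ℝ) ≤ -⟪cubeVtx3 sx sy sz, a i⟫),
          max_eq_right h]
        ring
      · rw [max_eq_right (by linarith : -⟪cubeVtx3 sx sy sz, a i⟫ ≤ 0),
          max_eq_left h]
        ring
    rw [Finset.sum_congr rfl fun i _ => key i, Finset.sum_sub_distrib, hlin sx sy sz]
    ring
  refine ⟨fun sx sy => part1 sx sy true false, part2, ?_, ?_⟩
  · intro sx sy sz
    cases sx <;> cases sy <;> cases sz
    · left
      have h := part2 false false false
      simp only [Bool.not_false] at h
      rw [h]
    · left
      have h := part2 false false true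
      simp only [Bool.not_false, Bool.not_true] at h
      rw [h]; exact part1 true true false true
    · right
      have h := part2 false true false
      simp only [Bool.not_false, Bool.not_true] at h
      rw [h]
    · right
      have h := part2 false true true
      simp only [Bool.not_false, Bool.not_true] at h
      rw [h]; exact part1 true false false true
    · right; exact part1 true false false true
    · right; rfl
    · left; exact part1 true true false true
    · left; rfl
  · -- the bound
    rw [hf, hf, ← Finset.sum_add_distrib]
    have hb : ∀ i ∈ Finset.univ,
        p i * max ⟪cubeVtx3 true true true, a i⟫ 0 +
        p i * max ⟪cubeVtx3 true false true, a i⟫ 0 ≤ p i * (1 + a i 0) := by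
      intro i _
      have e1 : ⟪cubeVtx3 true true true, a i⟫ = a i 0 + a i 1 := by
        rw [hinner]; norm_num
      have e2 : ⟪cubeVtx3 true false true, a i⟫ = a i 0 - a i 1 := by
        rw [hinner]; norm_num; ring
      rw [e1, e2]
      have h0 : (a i 0) ^ 2 ≤ 1 := by nlinarith [hsq i, sq_nonneg (a i 1)]
      have h1 : (a i 1) ^ 2 ≤ 1 := by nlinarith [hsq i, sq_nonneg (a i 0)]
      have hk := key_max_ineq (a i 0) (a i 1) h0 h1
      rw [← mul_add]
      exact mul_le_mul_of_nonneg_left hk (hp i)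
    calc (∑ i, (p i * max ⟪cubeVtx3 true true true, a i⟫ 0 +
              p i * max ⟪cubeVtx3 true false true, a i⟫ 0))
        ≤ ∑ i, p i * (1 + a i 0) := Finset.sum_le_sum hb
      _ = ∑ i, p i + ∑ i, p i * a i 0 := by
          rw [← Finset.sum_add_distrib]; exact Finset.sum_congr rfl fun i _ => by ring
      _ = 2 := by rw [hp2, hsum0]; ring
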